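/- arXiv:1801.05041 — 4 statements merged into one kernel-verified Lean document; each statement's English description precedes it below -/
import Mathlib

section
/- Knight's identity: For every τ ∈ (0,1) and all real numbers u and v, ρ_τ(u − v) − ρ_τ(u) = v·ψ_τ(u) + ∫_0^v (1{u ≤ s} − 1{u ≤ 0}) ds, where the integral is the signed (interval) integral. -/
open MeasureTheory

/-- The quantile check function `ρ_τ(u) = u (τ - 1{u ≤ 0})`. -/
noncomputable def rho (τ u : ℝ) : ℝ := u * (τ - if u ≤ 0 then 1 else 0)

/-- The quantile score function `ψ_τ(u) = 1{u ≤ 0} - τ`. -/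
noncomputable def psi (τ u : ℝ) : ℝ := (if u ≤ 0 then 1 else 0) - τ

lemma step_mono (u : ℝ) : Monotone (fun s : ℝ => if u ≤ s then (1 : ℝ) else 0) := by
  intro a b hab
  by_cases h : u ≤ a
  · simp [h, h.trans hab]
  · by_cases h' : u ≤ b <;> simp [h, h']

lemma step_intervalIntegrable (u a b : ℝ) :
    IntervalIntegrable (fun s : ℝ => if u ≤ s then (1 : ℝ) else 0) volume a b :=
  ((step_mono u).monotoneOn _).intervalIntegrable

lemma step_integral (u v : ℝ) :
    (∫ s in (0 : ℝ)..v, (if u ≤ s then (1 : ℝ) else 0))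
      = max (v - u) 0 - max (-u) 0 := by
  have key : ∀ x : ℝ, x ∈ Set.Ioo (min 0 v) (max 0 v) →
      HasDerivWithinAt (fun x : ℝ => max (x - u) 0)
        ((fun s : ℝ => if u ≤ s then (1 : ℝ) else 0) x) (Set.Ioi x) x := by
    intro x _
    rcases lt_trichotomy x u with hx | hx | hx
    · have : ∀ᶠ y in nhdsWithin x (Set.Ioi x), max (y - u) 0 = 0 := by
        have : Set.Iio u ∈ nhdsWithin x (Set.Ioi x) :=
          nhdsWithin_le_nhds (Iio_mem_nhds hx)
        filter_upwards [this] with y hy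
        simp [max_eq_right (by linarith [Set.mem_Iio.mp hy] : y - u ≤ 0)]
      have h0 : HasDerivWithinAt (fun _ : ℝ => (0 : ℝ)) 0 (Set.Ioi x) x :=
        (hasDerivWithinAt_const x _ 0)
      have := h0.congr_of_eventuallyEq this (by simp [max_eq_right (by linarith : x - u ≤ 0)])
      simpa [if_neg (not_le.mpr hx)] using this
    · have h1 : HasDerivWithinAt (fun y : ℝ => y - u) 1 (Set.Ioi x) x := by
        simpa using ((hasDerivAt_id x).sub_const u).hasDerivWithinAt
      have := h1.congr (fun y hy => by
          have : u ≤ y := by rw [← hx]; exact (Set.mem_Ioi.mp hy).le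
          exact max_eq_left (by linarith : (0:ℝ) ≤ y - u))
        (by rw [hx]; simp)
      simpa [hx.ge] using this
    · have : ∀ᶠ y in nhdsWithin x (Set.Ioi x), max (y - u) 0 = y - u := by
        have : Set.Ioi u ∈ nhdsWithin x (Set.Ioi x) :=
          nhdsWithin_le_nhds (Ioi_mem_nhds hx)
        filter_upwards [this] with y hy
        exact max_eq_left (by linarith [Set.mem_Ioi.mp hy])
      have h1 : HasDerivWithinAt (fun y : ℝ => y - u) 1 (Set.Ioi x) x := by
        simpa using ((hasDerivAt_id x).sub_const u).hasDerivWithinAt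
      have := h1.congr_of_eventuallyEq this (max_eq_left (by linarith))
      simpa [if_pos hx.le] using this
  have hcont : ContinuousOn (fun x : ℝ => max (x - u) 0) (Set.uIcc 0 v) :=
    (((continuous_id.sub continuous_const).max continuous_const)).continuousOn
  have := intervalIntegral.integral_eq_sub_of_hasDeriv_right hcont key
    (step_intervalIntegrable u 0 v)
  simpa using this

/-- Knight's identity. -/
theorem knight_identity (τ : ℝ) (hτ : τ ∈ Set.Ioo (0 : ℝ) 1) (u v : ℝ) :
    rho τ (u - v) - rho τ u
      = v * psi τ u
        + ∫ s in (0 : ℝ)..v,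
            ((if u ≤ s then (1 : ℝ) else 0) - if u ≤ 0 then 1 else 0) := by
  have hsplit :
      (∫ s in (0 : ℝ)..v, ((if u ≤ s then (1 : ℝ) else 0) - if u ≤ 0 then 1 else 0))
        = (max (v - u) 0 - max (-u) 0) - v * (if u ≤ 0 then 1 else 0) := by
    rw [intervalIntegral.integral_sub (step_intervalIntegrable u 0 v)
      intervalIntegrable_const, step_integral]
    simp [mul_comm]
  rw [hsplit]
  simp only [rho, psi]
  rcases le_or_gt u 0 with h0 | h0 <;> rcases le_or_gt u v with h1 | h1 <;>
    rcases le_or_gt (u - v) 0 with h2 | h2 <;>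
    simp [h0, not_le.mpr, max_eq_left, max_eq_right, sub_nonneg, sub_nonpos, h1, h2,
      le_of_lt, neg_nonneg, neg_nonpos] <;> ring_nf <;> nlinarith [hτ.1, hτ.2]
end

section
/- Two-shift decomposition of the check loss: For every τ ∈ (0,1) and all real numbers ε, a₁, a₂, ρ_τ(ε − a₁) − ρ_τ(ε − a₂) = (a₁ − a₂)·ψ_τ(ε) + ∫_{a₂}^{a₁} (1{ε ≤ s} − 1{ε ≤ 0}) ds. Consequently, for any finite sequence ε_1,…,ε_T of reals, ∑_{t=1}^T [ρ_τ(ε_t − a₁) − ρ_τ(ε_t − a₂)] = (a₁ − a₂) ∑_{t=1}^T ψ_τ(ε_t) + ∑_{t=1}^T ∫_{a₂}^{a₁} (1{ε_t ≤ s} − 1{ε_t ≤ 0}) ds. -/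
open MeasureTheory

lemma ind_mono (ε : ℝ) : Monotone (fun s : ℝ => if ε ≤ s then (1:ℝ) else 0) := by
  intro s t hst
  by_cases h : ε ≤ s
  · simp [h, h.trans hst]
  · by_cases h' : ε ≤ t <;> simp [h, h']

lemma ind_intInt (ε a b : ℝ) :
    IntervalIntegrable (fun s : ℝ => if ε ≤ s then (1:ℝ) else 0) volume a b :=
  (ind_mono ε).intervalIntegrable

lemma ind_integral_from (ε a : ℝ) :
    ∫ s in ε..a, (if ε ≤ s then (1:ℝ) else 0) = max a ε - ε := by
  rcases le_or_gt ε a with h | h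
  · rw [max_eq_left h]
    have hcg : Set.EqOn (fun s : ℝ => if ε ≤ s then (1:ℝ) else 0) (fun _ => (1:ℝ))
        (Set.uIcc ε a) := by
      intro s hs
      rw [Set.uIcc_of_le h] at hs
      simp [hs.1]
    rw [intervalIntegral.integral_congr hcg]
    simp
  · rw [max_eq_right h.le]
    have hae : ∀ᵐ s : ℝ ∂volume, s ∈ Set.uIoc ε a →
        (if ε ≤ s then (1:ℝ) else 0) = (fun _ => (0:ℝ)) s := by
      have h0 : ({ε}ᶜ : Set ℝ) ∈ ae volume :=
        compl_mem_ae_iff.2 (measure_singleton ε)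
      filter_upwards [h0] with s hs hmem
      rw [Set.uIoc_of_ge h.le] at hmem
      have : ¬ ε ≤ s := fun hle => hs (le_antisymm hmem.2 hle)
      simp [this]
    rw [intervalIntegral.integral_congr_ae hae]
    simp

lemma ind_integral (ε a b : ℝ) :
    ∫ s in b..a, (if ε ≤ s then (1:ℝ) else 0) = max a ε - max b ε := by
  have h := intervalIntegral.integral_add_adjacent_intervals
    (ind_intInt ε b ε) (ind_intInt ε ε a)
  rw [ind_integral_from ε a] at h
  have hb : ∫ s in b..ε, (if ε ≤ s then (1:ℝ) else 0) = -(max b ε - ε) := by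
    rw [← ind_integral_from ε b, intervalIntegral.integral_symm]
  rw [hb] at h
  linarith [h]

lemma pointwise (τ : ℝ) (ε a₁ a₂ : ℝ) :
    rho τ (ε - a₁) - rho τ (ε - a₂)
      = (a₁ - a₂) * psi τ ε
        + ∫ s in a₂..a₁,
            ((if ε ≤ s then (1 : ℝ) else 0) - if ε ≤ 0 then 1 else 0) := by
  have hint : ∫ s in a₂..a₁,
      ((if ε ≤ s then (1 : ℝ) else 0) - if ε ≤ 0 then 1 else 0)
      = (max a₁ ε - max a₂ ε) - (a₁ - a₂) * (if ε ≤ 0 then (1:ℝ) else 0) := by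
    rw [intervalIntegral.integral_sub (ind_intInt ε a₂ a₁) intervalIntegrable_const,
      ind_integral, intervalIntegral.integral_const, smul_eq_mul]
  rw [hint]
  have hmax : ∀ a : ℝ, max a ε = if ε ≤ a then a else ε := by
    intro a
    rcases le_or_gt ε a with h | h
    · rw [if_pos h, max_eq_left h]
    · rw [if_neg (not_le.2 h), max_eq_right h.le]
  simp only [rho, psi, sub_nonpos, hmax]
  split_ifs <;> try ring

/-- Two-shift decomposition of the check loss, pointwise and summed over a
finite sequence. -/
theorem check_loss_two_shift (τ : ℝ) (hτ : τ ∈ Set.Ioo (0 : ℝ) 1) :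
    (∀ ε a₁ a₂ : ℝ,
        rho τ (ε - a₁) - rho τ (ε - a₂)
          = (a₁ - a₂) * psi τ ε
            + ∫ s in a₂..a₁,
                ((if ε ≤ s then (1 : ℝ) else 0) - if ε ≤ 0 then 1 else 0))
    ∧ ∀ (T : ℕ) (ε : Fin T → ℝ) (a₁ a₂ : ℝ),
        ∑ t, (rho τ (ε t - a₁) - rho τ (ε t - a₂))
          = (a₁ - a₂) * ∑ t, psi τ (ε t)
            + ∑ t, ∫ s in a₂..a₁,
                ((if ε t ≤ s then (1 : ℝ) else 0) - if ε t ≤ 0 then 1 else 0) := by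
  refine ⟨fun ε a₁ a₂ => pointwise τ ε a₁ a₂, ?_⟩
  intro T ε a₁ a₂
  simp only [pointwise τ]
  rw [Finset.mul_sum, ← Finset.sum_add_distrib]
end

section
/- Pointwise bound for the empirical remainder: Let F : ℝ → ℝ be Lipschitz with constant f_max ≥ 0, and let ε, a ∈ ℝ. Then |∫_0^a (1{ε ≤ s} − 1{ε ≤ 0} − (F(s) − F(0))) ds| ≤ (f_max/2)·a² + |a|·1{|ε| ≤ |a|}. -/
open MeasureTheory

/-- The remainder term `I(a) = ∫_0^a (1{ε ≤ s} - 1{ε ≤ 0} - (F s - F 0)) ds`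
from the proof of Lemma 4 of the paper. -/
noncomputable def Irem (F : ℝ → ℝ) (ε a : ℝ) : ℝ :=
  ∫ s in (0 : ℝ)..a,
    ((if ε ≤ s then (1 : ℝ) else 0) - (if ε ≤ 0 then 1 else 0) - (F s - F 0))

/-- Pointwise bound for the empirical remainder: if `F` is Lipschitz with
constant `f_max`, then `|I(a)| ≤ (f_max/2) a² + |a| 1{|ε| ≤ |a|}`. -/
theorem remainder_pointwise_bound (F : ℝ → ℝ) (fmax : ℝ) (hfmax : 0 ≤ fmax)
    (hLip : ∀ s s' : ℝ, |F s - F s'| ≤ fmax * |s - s'|) (ε a : ℝ) :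
    |Irem F ε a| ≤ fmax / 2 * a ^ 2 + |a| * (if |ε| ≤ |a| then 1 else 0) := by
  have hFcont : Continuous F := by
    have h : LipschitzWith fmax.toNNReal F := by
      apply LipschitzWith.of_dist_le_mul
      intro x y
      simpa [Real.dist_eq, Real.coe_toNNReal fmax hfmax] using hLip x y
    exact h.continuous
  set g : ℝ → ℝ := fun s => (if ε ≤ s then (1:ℝ) else 0) - (if ε ≤ 0 then 1 else 0)
    with hg_def
  set h : ℝ → ℝ := fun s => F s - F 0 with hh_def
  have hg_int : IntervalIntegrable g volume 0 a := by
    have hmono : Monotone (fun s => (if ε ≤ s then (1:ℝ) else 0)) := by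
      intro x y hxy
      by_cases hx : ε ≤ x
      · simp [hx, hx.trans hxy]
      · simp only [hx, if_false]
        split_ifs <;> norm_num
    exact hmono.intervalIntegrable.sub intervalIntegrable_const
  have hh_int : IntervalIntegrable h volume 0 a :=
    (hFcont.sub continuous_const).intervalIntegrable _ _
  have hsplit : Irem F ε a = (∫ s in (0:ℝ)..a, g s) - (∫ s in (0:ℝ)..a, h s) := by
    rw [Irem, ← intervalIntegral.integral_sub hg_int hh_int]
  -- bound for the F-part
  have hhb : |∫ s in (0:ℝ)..a, h s| ≤ fmax / 2 * a ^ 2 := by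
    have hb : ‖∫ s in (0:ℝ)..a, h s‖ ≤ |(∫ s in (0:ℝ)..a, fmax * |s|)| := by
      apply intervalIntegral.norm_integral_le_abs_of_norm_le
      · filter_upwards with t
        simpa [hh_def, Real.norm_eq_abs] using hLip t 0
      · exact (continuous_const.mul continuous_abs).intervalIntegrable _ _
    have hval : |(∫ s in (0:ℝ)..a, fmax * |s|)| = fmax / 2 * a ^ 2 := by
      rw [intervalIntegral.integral_const_mul]
      rcases le_total 0 a with ha | ha
      · rw [intervalIntegral.integral_congr (g := fun t => t)
          (fun t ht => by
            rw [Set.uIcc_of_le ha] at ht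
            exact abs_of_nonneg ht.1),
          integral_id]
        have he : fmax * ((a ^ 2 - 0 ^ 2) / 2) = fmax / 2 * a ^ 2 := by ring
        rw [he]
        exact abs_of_nonneg (by positivity)
      · rw [intervalIntegral.integral_congr (g := fun t => -t)
          (fun t ht => by
            rw [Set.uIcc_of_ge ha] at ht
            exact abs_of_nonpos ht.2),
          intervalIntegral.integral_neg, integral_id]
        have he : fmax * -((a ^ 2 - 0 ^ 2) / 2) = -(fmax / 2 * a ^ 2) := by ring
        rw [he, abs_neg]
        exact abs_of_nonneg (by positivity)
    calc |∫ s in (0:ℝ)..a, h s| ≤ |(∫ s in (0:ℝ)..a, fmax * |s|)| := hb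
      _ = fmax / 2 * a ^ 2 := hval
  -- bound for the indicator part
  have hgb : |∫ s in (0:ℝ)..a, g s| ≤ |a| * (if |ε| ≤ |a| then 1 else 0) := by
    by_cases hε : |ε| ≤ |a|
    · simp only [hε, if_true, mul_one]
      have := intervalIntegral.norm_integral_le_of_norm_le_const (C := 1)
        (f := g) (a := (0:ℝ)) (b := a) ?_
      · simpa [Real.norm_eq_abs] using this
      · intro t ht
        simp only [hg_def, Real.norm_eq_abs]
        split_ifs <;> norm_num
    · simp only [hε, if_false, mul_zero]
      have hzero : ∀ t ∈ Set.uIcc (0:ℝ) a, g t = 0 := by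
        intro t ht
        have htabs : |t| ≤ |a| := by
          rw [Set.mem_uIcc] at ht
          rw [abs_le]
          rcases ht with ⟨h1, h2⟩ | ⟨h1, h2⟩
          · exact ⟨le_trans (neg_nonpos.mpr (abs_nonneg a)) h1,
              h2.trans (le_abs_self a)⟩
          · exact ⟨le_trans (neg_abs_le a) h1, h2.trans (abs_nonneg a)⟩
        push_neg at hε
        rcases le_or_gt ε 0 with he | he
        · have : ε ≤ t := by
            have hE : |ε| = -ε := abs_of_nonpos he
            linarith [neg_le_abs t, htabs]
          simp [hg_def, this, he]
        · have h1 : ¬ ε ≤ t := by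
            have : |ε| = ε := abs_of_pos he
            nlinarith [abs_le.mp htabs]
          have h2 : ¬ ε ≤ 0 := not_le.mpr he
          simp [hg_def, h1, h2]
      rw [intervalIntegral.integral_congr (g := fun _ => (0:ℝ)) hzero]
      simp
  calc |Irem F ε a|
      = |(∫ s in (0:ℝ)..a, g s) - (∫ s in (0:ℝ)..a, h s)| := by rw [hsplit]
    _ ≤ |∫ s in (0:ℝ)..a, g s| + |∫ s in (0:ℝ)..a, h s| := abs_sub _ _
    _ ≤ |a| * (if |ε| ≤ |a| then 1 else 0) + fmax / 2 * a ^ 2 :=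
        add_le_add hgb hhb
    _ = fmax / 2 * a ^ 2 + |a| * (if |ε| ≤ |a| then 1 else 0) := by ring
end

section
/- Second-moment bound for the empirical remainder: Let ε be a real-valued random variable whose cumulative distribution function F is Lipschitz with constant f_max ≥ 0, and let a ∈ ℝ. Define I(a) := ∫_0^a (1{ε ≤ s} − 1{ε ≤ 0} − (F(s) − F(0))) ds. Then E[I(a)²] ≤ (f_max²/2)·a⁴ + 4·f_max·|a|³. -/
open MeasureTheory

lemma ind_intervalIntegrable (e a : ℝ) :
    IntervalIntegrable
      (fun s => (if e ≤ s then (1 : ℝ) else 0) - (if e ≤ 0 then 1 else 0))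
      MeasureTheory.volume 0 a := by
  have hmono : Monotone (fun s => (if e ≤ s then (1 : ℝ) else 0)
      - (if e ≤ 0 then 1 else 0)) := by
    intro x y hxy
    dsimp only
    gcongr
    by_cases hx : e ≤ x
    · rw [if_pos hx, if_pos (hx.trans hxy)]
    · rw [if_neg hx]
      split_ifs <;> norm_num
  exact hmono.intervalIntegrable

lemma A_abs_le (e a : ℝ) :
    |∫ s in (0 : ℝ)..a,
      ((if e ≤ s then (1 : ℝ) else 0) - (if e ≤ 0 then 1 else 0))| ≤ |a| := by
  have h := intervalIntegral.norm_integral_le_of_norm_le_const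
    (f := fun s => (if e ≤ s then (1 : ℝ) else 0) - (if e ≤ 0 then 1 else 0))
    (a := (0:ℝ)) (b := a) (C := 1) ?_
  · simpa using h
  · intro x _
    simp only [Real.norm_eq_abs]
    split_ifs <;> norm_num

lemma A_eq_zero (e a : ℝ) (h : e ≤ a ⊓ 0 ∨ a ⊔ 0 < e) :
    (∫ s in (0 : ℝ)..a,
      ((if e ≤ s then (1 : ℝ) else 0) - (if e ≤ 0 then 1 else 0))) = 0 := by
  have : Set.EqOn (fun s => (if e ≤ s then (1 : ℝ) else 0)
      - (if e ≤ 0 then 1 else 0)) (fun _ => (0:ℝ)) (Set.uIcc 0 a) := by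
    intro s hs
    rw [Set.uIcc_eq_union] at hs
    have hs1 : a ⊓ 0 ≤ s := by
      rcases hs with hs | hs
      · exact le_trans (inf_le_right) hs.1
      · exact le_trans (inf_le_left) hs.1
    have hs2 : s ≤ a ⊔ 0 := by
      rcases hs with hs | hs
      · exact le_trans hs.2 (le_sup_left)
      · exact le_trans hs.2 (le_sup_right)
    rcases h with h | h
    · have h1 : e ≤ s := h.trans hs1
      have h2 : e ≤ 0 := h.trans inf_le_right
      simp [h1, h2]
    · have h1 : ¬ e ≤ s := by push_neg; exact lt_of_le_of_lt hs2 h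
      have h2 : ¬ e ≤ 0 := by push_neg; exact lt_of_le_of_lt le_sup_right h
      simp [h1, h2]
  rw [intervalIntegral.integral_congr this]
  simp

lemma B_abs_le (F : ℝ → ℝ) (hFcont : Continuous F) (fmax : ℝ) (hfmax : 0 ≤ fmax)
    (hLip : ∀ s s' : ℝ, |F s - F s'| ≤ fmax * |s - s'|) (a : ℝ) :
    |∫ s in (0 : ℝ)..a, (F s - F 0)| ≤ fmax * a ^ 2 / 2 := by
  have hint : ∀ u v : ℝ, IntervalIntegrable (fun s => F s - F 0)
      MeasureTheory.volume u v := fun u v =>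
    ((hFcont.sub continuous_const).intervalIntegrable u v)
  rcases le_or_gt 0 a with ha | ha
  · calc |∫ s in (0 : ℝ)..a, (F s - F 0)|
        ≤ ∫ s in (0 : ℝ)..a, |F s - F 0| :=
          intervalIntegral.abs_integral_le_integral_abs ha
      _ ≤ ∫ s in (0 : ℝ)..a, fmax * s := by
          apply intervalIntegral.integral_mono_on ha ((hint 0 a).abs)
          · exact (continuous_const.mul continuous_id).intervalIntegrable 0 a
          · intro s hs
            have := hLip s 0
            rwa [sub_zero, abs_of_nonneg hs.1] at this
      _ = fmax * a ^ 2 / 2 := by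
          rw [intervalIntegral.integral_const_mul, integral_id]
          ring
  · have hsymm : (∫ s in (0 : ℝ)..a, (F s - F 0))
        = -∫ s in a..(0 : ℝ), (F s - F 0) := (intervalIntegral.integral_symm a 0)
    rw [hsymm, abs_neg]
    calc |∫ s in a..(0 : ℝ), (F s - F 0)|
        ≤ ∫ s in a..(0 : ℝ), |F s - F 0| :=
          intervalIntegral.abs_integral_le_integral_abs ha.le
      _ ≤ ∫ s in a..(0 : ℝ), fmax * (-s) := by
          apply intervalIntegral.integral_mono_on ha.le ((hint a 0).abs)
          · exact (continuous_const.mul continuous_neg).intervalIntegrable a 0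
          · intro s hs
            have := hLip s 0
            rwa [sub_zero, abs_of_nonpos hs.2] at this
      _ = fmax * a ^ 2 / 2 := by
          rw [intervalIntegral.integral_const_mul, intervalIntegral.integral_neg,
            integral_id]
          ring

/-- Second-moment bound for the empirical remainder: if the cdf `F` of `ε` is
Lipschitz with constant `f_max`, then `E[I(a)²] ≤ (f_max²/2) a⁴ + 4 f_max |a|³`. -/
theorem remainder_second_moment {Ω : Type*} [MeasurableSpace Ω]
    (P : Measure Ω) [IsProbabilityMeasure P]
    (ε : Ω → ℝ) (hε : Measurable ε)
    (fmax : ℝ) (hfmax : 0 ≤ fmax) (F : ℝ → ℝ)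
    (hFdef : ∀ s : ℝ, F s = (P {ω | ε ω ≤ s}).toReal)
    (hLip : ∀ s s' : ℝ, |F s - F s'| ≤ fmax * |s - s'|) (a : ℝ) :
    ∫ ω, (Irem F (ε ω) a) ^ 2 ∂P ≤ fmax ^ 2 / 2 * a ^ 4 + 4 * fmax * |a| ^ 3 := by
  -- F is Lipschitz hence continuous
  have hFcont : Continuous F := by
    have : LipschitzWith (Real.toNNReal fmax) F := by
      apply LipschitzWith.of_dist_le_mul
      intro x y
      rw [Real.dist_eq, Real.dist_eq, Real.coe_toNNReal fmax hfmax]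
      exact hLip x y
    exact this.continuous
  set B : ℝ := ∫ s in (0 : ℝ)..a, (F s - F 0) with hBdef
  have hB : |B| ≤ fmax * a ^ 2 / 2 := B_abs_le F hFcont fmax hfmax hLip a
  set A : ℝ → ℝ := fun e => ∫ s in (0 : ℝ)..a,
      ((if e ≤ s then (1 : ℝ) else 0) - (if e ≤ 0 then 1 else 0)) with hAdef
  have hIrem : ∀ e : ℝ, Irem F e a = A e - B := by
    intro e
    rw [Irem, hAdef, hBdef]
    exact intervalIntegral.integral_sub (ind_intervalIntegrable e a)
      ((hFcont.sub continuous_const).intervalIntegrable 0 a)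
  set S : Set Ω := {ω | ε ω ≤ a ⊔ 0} \ {ω | ε ω ≤ a ⊓ 0} with hSdef
  have hSmeas : MeasurableSet S :=
    (hε measurableSet_Iic).diff (hε measurableSet_Iic)
  -- pointwise bound
  set g : Ω → ℝ := fun ω => S.indicator (fun _ => 2 * a ^ 2) ω
      + fmax ^ 2 * a ^ 4 / 2 with hgdef
  have hbound : ∀ ω, (Irem F (ε ω) a) ^ 2 ≤ g ω := by
    intro ω
    rw [hIrem (ε ω), hgdef]
    dsimp only
    by_cases hω : ω ∈ S
    · rw [Set.indicator_of_mem hω]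
      have hA := A_abs_le (ε ω) a
      have hA2 : (A (ε ω)) ^ 2 ≤ a ^ 2 := by
        have := pow_le_pow_left₀ (abs_nonneg (A (ε ω))) hA 2
        rwa [sq_abs, sq_abs] at this
      have hB2 : B ^ 2 ≤ (fmax * a ^ 2 / 2) ^ 2 := by
        have := pow_le_pow_left₀ (abs_nonneg B) hB 2
        rwa [sq_abs] at this
      nlinarith [sq_nonneg (A (ε ω) + B), sq_nonneg (fmax * a ^ 2)]
    · rw [Set.indicator_of_notMem hω]
      have hA0 : A (ε ω) = 0 := by
        apply A_eq_zero
        rw [hSdef, Set.mem_diff] at hω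
        push_neg at hω
        simp only [Set.mem_setOf_eq] at hω
        by_cases h1 : ε ω ≤ a ⊔ 0
        · exact Or.inl (hω h1)
        · exact Or.inr (by push_neg at h1; exact h1)
      rw [hA0]
      have hB2 : B ^ 2 ≤ (fmax * a ^ 2 / 2) ^ 2 := by
        have := pow_le_pow_left₀ (abs_nonneg B) hB 2
        rwa [sq_abs] at this
      nlinarith [sq_nonneg (fmax * a ^ 2)]
  -- integrability of g
  have hg_int : Integrable g P := by
    apply Integrable.add
    · exact (integrable_const (2 * a ^ 2)).indicator hSmeas
    · exact integrable_const _
  have hmono : ∫ ω, (Irem F (ε ω) a) ^ 2 ∂P ≤ ∫ ω, g ω ∂P := by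
    apply integral_mono_of_nonneg
    · exact Filter.Eventually.of_forall fun ω => sq_nonneg _
    · exact hg_int
    · exact Filter.Eventually.of_forall hbound
  -- measure bound
  have hPS : (P S).toReal ≤ fmax * |a| := by
    have hsub : {ω | ε ω ≤ a ⊓ 0} ⊆ {ω | ε ω ≤ a ⊔ 0} := by
      intro ω hω
      simp only [Set.mem_setOf_eq] at hω ⊢
      have h1 : a ⊓ 0 ≤ a := inf_le_left
      have h2 : a ≤ a ⊔ 0 := le_sup_left
      linarith
    have hdiff : P S = P {ω | ε ω ≤ a ⊔ 0} - P {ω | ε ω ≤ a ⊓ 0} :=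
      measure_diff hsub (hε measurableSet_Iic).nullMeasurableSet (measure_ne_top P _)
    have hle : P {ω | ε ω ≤ a ⊓ 0} ≤ P {ω | ε ω ≤ a ⊔ 0} := measure_mono hsub
    rw [hdiff, ENNReal.toReal_sub_of_le hle (measure_ne_top P _)]
    rw [← hFdef, ← hFdef]
    calc F (a ⊔ 0) - F (a ⊓ 0) ≤ |F (a ⊔ 0) - F (a ⊓ 0)| := le_abs_self _
      _ ≤ fmax * |a ⊔ 0 - a ⊓ 0| := hLip _ _
      _ = fmax * |a| := by
          congr 1
          rcases le_or_gt 0 a with h | h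
          · rw [sup_eq_left.2 h, inf_eq_right.2 h, sub_zero, abs_of_nonneg h]
          · rw [sup_eq_right.2 h.le, inf_eq_left.2 h.le, zero_sub, abs_of_neg h,
              abs_of_pos (neg_pos.2 h)]
  -- compute ∫ g
  have hgval : ∫ ω, g ω ∂P = 2 * a ^ 2 * (P S).toReal + fmax ^ 2 * a ^ 4 / 2 := by
    rw [hgdef]
    rw [integral_add ((integrable_const (2 * a ^ 2)).indicator hSmeas)
      (integrable_const _)]
    rw [integral_indicator_const _ hSmeas, integral_const]
    simp [mul_comm]
    exact Or.inl rfl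
  rw [hgval] at hmono
  refine hmono.trans ?_
  have habs3 : |a| ^ 3 = a ^ 2 * |a| := by
    rw [pow_succ, sq_abs]
  nlinarith [abs_nonneg a, sq_nonneg a, mul_le_mul_of_nonneg_left hPS
    (by positivity : (0:ℝ) ≤ 2 * a ^ 2), mul_nonneg hfmax (abs_nonneg a),
    mul_nonneg (mul_nonneg hfmax (abs_nonneg a)) (sq_nonneg a)]
end
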